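/- Let Φ be the linear functional on ℚ(q)[z] with Φ([n,z choose n]_q) = 1/(-q^2;q)_n, and let P_{0,n}(z) be the specialized big q-Jacobi polynomials with ℓ = 0. Then Φ(P_{0,n}(z)) = 0 for every n ≥ 1. -/

import Mathlib

open Finset Polynomial

noncomputable def q : RatFunc ℚ := RatFunc.X

/-- q-integer `[k]_q = (1-q^k)/(1-q)` for `k : ℤ`. -/
noncomputable def qint (k : ℤ) : RatFunc ℚ := (1 - q ^ k) / (1 - q)

/-- q-factorial `[n]_q!`. -/
noncomputable def qfact (n : ℕ) : RatFunc ℚ := ∏ m ∈ Finset.range n, qint (m + 1)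

/-- q-Pochhammer `(A;Q)_n`. -/
noncomputable def qPoch (Q A : RatFunc ℚ) (n : ℕ) : RatFunc ℚ :=
  ∏ j ∈ Finset.range n, (1 - A * Q ^ j)

/-- The generalized q-binomial polynomial `[m, z choose n]_q`. -/
noncomputable def qbinomPoly (m n : ℕ) : Polynomial (RatFunc ℚ) :=
  Polynomial.C (qfact n)⁻¹ *
    ∏ k ∈ Finset.Icc ((m : ℤ) - n + 1) (m : ℤ),
      (Polynomial.C (qint k) + Polynomial.C (q ^ k) * Polynomial.X)

/-- The polynomial `(q(1-(1-q)z); q)_k` in the variable `z`. -/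
noncomputable def pochPoly (k : ℕ) : Polynomial (RatFunc ℚ) :=
  ∏ j ∈ Finset.range k,
    (1 - Polynomial.C q * (1 - Polynomial.C (1 - q) * Polynomial.X) * Polynomial.C q ^ j)

/-- The specialized (rescaled, shifted) big q-Jacobi polynomials `P_{ℓ,n}(z)`. -/
noncomputable def bigP (ℓ n : ℕ) : Polynomial (RatFunc ℚ) :=
  Polynomial.C ((-1) ^ n * qPoch q (q ^ (ℓ + 1)) n /
      (q ^ n * (1 - q) ^ n * qPoch q (-q ^ (n + ℓ + 1)) n)) *
    ∑ k ∈ Finset.range (n + 1),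
      Polynomial.C (qPoch q (q ^ (-(n : ℤ))) k * qPoch q (-q ^ (n + ℓ + 1)) k * q ^ k /
          (qPoch q q k * qPoch q (q ^ (ℓ + 1)) k)) * pochPoly k

lemma q_ne_zero : q ≠ 0 := RatFunc.X_ne_zero

lemma q_pow_cast (m : ℕ) : q ^ (m : ℤ) = q ^ m := zpow_natCast q m

lemma q_zpow_neg_nat (m : ℕ) : q ^ (-(m : ℤ)) = (q ^ m)⁻¹ := by
  rw [zpow_neg, q_pow_cast]

lemma one_sub_q_pow_ne_zero (m : ℕ) (hm : m ≠ 0) : (1 : RatFunc ℚ) - q ^ m ≠ 0 := by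
  have h : (1 : RatFunc ℚ) - q ^ m
      = algebraMap (Polynomial ℚ) (RatFunc ℚ) (1 - Polynomial.X ^ m) := by
    simp [q, map_sub, map_pow, RatFunc.algebraMap_X]
  rw [h]
  apply RatFunc.algebraMap_ne_zero
  intro hp
  have := congrArg (fun p => Polynomial.coeff p m) hp
  simp [Polynomial.coeff_one, Polynomial.coeff_X_pow, hm] at this

lemma one_add_q_pow_ne_zero (m : ℕ) : (1 : RatFunc ℚ) + q ^ m ≠ 0 := by
  have h : (1 : RatFunc ℚ) + q ^ m
      = algebraMap (Polynomial ℚ) (RatFunc ℚ) (1 + Polynomial.X ^ m) := by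
    simp [q, map_add, map_pow, RatFunc.algebraMap_X]
  rw [h]
  apply RatFunc.algebraMap_ne_zero
  intro hp
  have := congrArg (Polynomial.eval 1) hp
  simp at this

lemma one_sub_q_ne_zero : (1 : RatFunc ℚ) - q ≠ 0 := by
  have := one_sub_q_pow_ne_zero 1 one_ne_zero
  simpa using this

lemma qPoch_zero (A : RatFunc ℚ) : qPoch q A 0 = 1 := by simp [qPoch]

lemma qPoch_succ (A : RatFunc ℚ) (k : ℕ) :
    qPoch q A (k + 1) = qPoch q A k * (1 - A * q ^ k) := Finset.prod_range_succ _ _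

lemma qPoch_succ' (A : RatFunc ℚ) (k : ℕ) :
    qPoch q A (k + 1) = (1 - A) * qPoch q (A * q) k := by
  unfold qPoch
  rw [Finset.prod_range_succ']
  rw [mul_comm]
  congr 1
  · simp
  · exact Finset.prod_congr rfl fun j _ => by ring

lemma qPoch_C_ne_zero (k : ℕ) : qPoch q q k ≠ 0 := by
  unfold qPoch
  rw [Finset.prod_ne_zero_iff]
  intro j _
  have : (1 : RatFunc ℚ) - q * q ^ j = 1 - q ^ (j + 1) := by ring
  rw [this]
  exact one_sub_q_pow_ne_zero _ (Nat.succ_ne_zero j)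

lemma qPoch_D_ne_zero (k : ℕ) : qPoch q (-q ^ 2) k ≠ 0 := by
  unfold qPoch
  rw [Finset.prod_ne_zero_iff]
  intro j _
  have : (1 : RatFunc ℚ) - -q ^ 2 * q ^ j = 1 + q ^ (j + 2) := by ring
  rw [this]
  exact one_add_q_pow_ne_zero _

lemma qPoch_B_ne_zero (m k : ℕ) : qPoch q (-q ^ m) k ≠ 0 := by
  unfold qPoch
  rw [Finset.prod_ne_zero_iff]
  intro j _
  have : (1 : RatFunc ℚ) - -q ^ m * q ^ j = 1 + q ^ (m + j) := by ring
  rw [this]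
  exact one_add_q_pow_ne_zero _

lemma qPoch_A_vanish (n : ℕ) : qPoch q (q ^ (-(n : ℤ))) (n + 1) = 0 := by
  unfold qPoch
  apply Finset.prod_eq_zero (Finset.self_mem_range_succ n)
  rw [zpow_neg, zpow_natCast]
  rw [inv_mul_cancel₀ (pow_ne_zero _ q_ne_zero)]
  ring

noncomputable def tS (n k : ℕ) : RatFunc ℚ :=
  q ^ k * qPoch q (q ^ (-(n : ℤ))) k * qPoch q (-q ^ (n + 1)) k /
    (qPoch q q k * qPoch q (-q ^ 2) k)

noncomputable def cstS (n : ℕ) : RatFunc ℚ :=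
  (1 + q ^ 2 * q ^ n * q ^ n) / (q * (1 - q ^ n) * (1 + q ^ (n + 1)))

noncomputable def a1S (n : ℕ) : RatFunc ℚ := q ^ n * (1 + q ^ (n + 2)) / (1 - q ^ n)

noncomputable def gS (n : ℕ) : ℕ → RatFunc ℚ
  | 0 => 0
  | (k + 1) => cstS n * q ^ (k + 1) * qPoch q (q ^ (-(n : ℤ))) k *
      qPoch q (-q ^ (n + 1)) (k + 1) / (qPoch q q k * qPoch q (-q ^ 2) k)

set_option maxHeartbeats 1000000 in
lemma key (n : ℕ) (hn : 1 ≤ n) (k : ℕ) :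
    tS n k + a1S n * tS (n + 1) k = gS n (k + 1) - gS n k := by
  have hq := q_ne_zero
  have h1q : (1 : RatFunc ℚ) - q ^ n ≠ 0 := one_sub_q_pow_ne_zero n (by omega)
  have h2q : (1 : RatFunc ℚ) + q ^ (n + 1) ≠ 0 := one_add_q_pow_ne_zero (n + 1)
  cases k with
  | zero =>
      show tS n 0 + a1S n * tS (n + 1) 0 = gS n (0 + 1) - gS n 0
      simp only [tS, a1S, gS, cstS, qPoch_zero, qPoch_succ, pow_zero]
      field_simp
      ring
  | succ k =>
      have hPn : (q ^ n : RatFunc ℚ) ≠ 0 := pow_ne_zero _ hq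
      have hPn1 : (q ^ (n + 1) : RatFunc ℚ) ≠ 0 := pow_ne_zero _ hq
      have hC := qPoch_C_ne_zero k
      have hD := qPoch_D_ne_zero k
      have hCk1 : (1 : RatFunc ℚ) - q * q ^ k ≠ 0 := by
        rw [show (1 : RatFunc ℚ) - q * q ^ k = 1 - q ^ (k + 1) by ring]
        exact one_sub_q_pow_ne_zero _ (Nat.succ_ne_zero k)
      have hDk1 : (1 : RatFunc ℚ) - -q ^ 2 * q ^ k ≠ 0 := by
        rw [show (1 : RatFunc ℚ) - -q ^ 2 * q ^ k = 1 + q ^ (k + 2) by ring]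
        exact one_add_q_pow_ne_zero _
      have h2q' : (1 : RatFunc ℚ) + q * q ^ n ≠ 0 := by
        rw [show (1 : RatFunc ℚ) + q * q ^ n = 1 + q ^ (n + 1) by ring]
        exact h2q
      have hD2 : (1 : RatFunc ℚ) + q ^ 2 * q ^ k ≠ 0 := by
        rw [show (1 : RatFunc ℚ) + q ^ 2 * q ^ k = 1 - -q ^ 2 * q ^ k by ring]
        exact hDk1
      set a := qPoch q ((q ^ n)⁻¹) k with ha
      set b := qPoch q (-q ^ (n + 1)) k with hb
      set c := qPoch q q k with hc
      set d := qPoch q (-q ^ 2) k with hd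
      have hK : c * (1 - q * q ^ k) * (d * (1 - -q ^ 2 * q ^ k)) ≠ 0 :=
        mul_ne_zero (mul_ne_zero hC hCk1) (mul_ne_zero hD hDk1)
      have hDne : q ^ 2 * (q ^ n * q ^ n) * (1 - q ^ n) * (1 + q * q ^ n) * c * d *
          (1 - q * q ^ k) * (1 + q ^ 2 * q ^ k) ≠ 0 :=
        mul_ne_zero (mul_ne_zero (mul_ne_zero (mul_ne_zero (mul_ne_zero (mul_ne_zero
          (mul_ne_zero (pow_ne_zero 2 hq) (mul_ne_zero hPn hPn)) h1q) h2q') hC) hD) hCk1) hD2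
      have hA'' : qPoch q ((q ^ (n + 1))⁻¹) (k + 1) = (1 - (q ^ (n + 1))⁻¹) * a := by
        rw [qPoch_succ', ha]
        congr 2
        rw [pow_succ, mul_inv, mul_assoc, inv_mul_cancel₀ q_ne_zero, mul_one]
      have hB' : qPoch q (-q ^ (n + 1 + 1)) (k + 1)
          = b * (1 + q ^ (n + 1) * q ^ k) * (1 + q ^ (n + 1) * q ^ (k + 1)) /
            (1 + q ^ (n + 1)) := by
        rw [eq_div_iff h2q]
        have step : qPoch q (-q ^ (n + 1)) (k + 2)
            = (1 + q ^ (n + 1)) * qPoch q (-q ^ (n + 1 + 1)) (k + 1) := by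
          rw [qPoch_succ' (-q ^ (n + 1)) (k + 1)]
          rw [show -q ^ (n + 1) * q = -q ^ (n + 1 + 1) by ring]
          ring
        have step2 : qPoch q (-q ^ (n + 1)) (k + 2)
            = b * (1 + q ^ (n + 1) * q ^ k) * (1 + q ^ (n + 1) * q ^ (k + 1)) := by
          rw [qPoch_succ, qPoch_succ, hb]
          ring
        rw [mul_comm, ← step, step2]
      have e1 : tS n (k + 1)
          = q ^ 3 * q ^ n * (1 - q ^ n) * (1 + q * q ^ n) * q ^ k * a * b *
              (q ^ n - q ^ k) * (1 + q * q ^ n * q ^ k) /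
            (q ^ 2 * (q ^ n * q ^ n) * (1 - q ^ n) * (1 + q * q ^ n) * c * d *
              (1 - q * q ^ k) * (1 + q ^ 2 * q ^ k)) := by
        simp only [tS, q_zpow_neg_nat]
        rw [qPoch_succ ((q ^ n)⁻¹), qPoch_succ (-q ^ (n + 1)), qPoch_succ q,
          qPoch_succ (-q ^ 2), ← ha, ← hb, ← hc, ← hd]
        rw [div_eq_div_iff hK hDne]
        field_simp
        ring
      have e2a : tS (n + 1) (k + 1)
          = q * q ^ k * (q * q ^ n - 1) * a * b * (1 + q * q ^ n * q ^ k) *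
              (1 + q ^ 2 * q ^ n * q ^ k) /
            (q ^ (n + 1) * ((1 + q ^ (n + 1)) *
              (c * (1 - q * q ^ k) * (d * (1 - -q ^ 2 * q ^ k))))) := by
        simp only [tS, q_zpow_neg_nat]
        rw [qPoch_succ q, qPoch_succ (-q ^ 2), ← hc, ← hd, hA'', hB']
        rw [mul_div_assoc', div_div]
        rw [div_eq_div_iff (mul_ne_zero h2q hK)
          (mul_ne_zero hPn1 (mul_ne_zero h2q hK))]
        field_simp
        ring
      have e2 : a1S n * tS (n + 1) (k + 1)
          = q ^ 2 * (q ^ n * q ^ n) * (1 + q ^ 2 * q ^ n) * q ^ k * (q * q ^ n - 1) * a * b *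
              (1 + q * q ^ n * q ^ k) * (1 + q ^ 2 * q ^ n * q ^ k) /
            (q ^ 2 * (q ^ n * q ^ n) * (1 - q ^ n) * (1 + q * q ^ n) * c * d *
              (1 - q * q ^ k) * (1 + q ^ 2 * q ^ k)) := by
        rw [e2a]
        simp only [a1S]
        rw [div_mul_div_comm]
        rw [div_eq_div_iff (mul_ne_zero h1q (mul_ne_zero hPn1 (mul_ne_zero h2q hK))) hDne]
        ring
      have e3 : gS n (k + 1 + 1)
          = (1 + q ^ 2 * q ^ n * q ^ n) * q ^ 3 * q ^ n * q ^ k * a * b *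
              (q ^ n - q ^ k) * (1 + q * q ^ n * q ^ k) * (1 + q ^ 2 * q ^ n * q ^ k) /
            (q ^ 2 * (q ^ n * q ^ n) * (1 - q ^ n) * (1 + q * q ^ n) * c * d *
              (1 - q * q ^ k) * (1 + q ^ 2 * q ^ k)) := by
        show cstS n * q ^ (k + 1 + 1) * qPoch q (q ^ (-(n : ℤ))) (k + 1) *
            qPoch q (-q ^ (n + 1)) (k + 1 + 1) /
            (qPoch q q (k + 1) * qPoch q (-q ^ 2) (k + 1)) = _
        simp only [cstS, q_zpow_neg_nat]
        rw [qPoch_succ ((q ^ n)⁻¹), qPoch_succ (-q ^ (n + 1)) (k + 1),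
          qPoch_succ (-q ^ (n + 1)) k, qPoch_succ q, qPoch_succ (-q ^ 2),
          ← ha, ← hb, ← hc, ← hd]
        simp only [div_mul_eq_mul_div]
        rw [div_div]
        rw [div_eq_div_iff (mul_ne_zero (mul_ne_zero (mul_ne_zero hq h1q) h2q) hK) hDne]
        field_simp
        ring
      have e4 : gS n (k + 1)
          = (1 + q ^ 2 * q ^ n * q ^ n) * q ^ 2 * (q ^ n * q ^ n) * q ^ k * a * b *
              (1 + q * q ^ n * q ^ k) * (1 - q * q ^ k) * (1 + q ^ 2 * q ^ k) /
            (q ^ 2 * (q ^ n * q ^ n) * (1 - q ^ n) * (1 + q * q ^ n) * c * d *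
              (1 - q * q ^ k) * (1 + q ^ 2 * q ^ k)) := by
        show cstS n * q ^ (k + 1) * qPoch q (q ^ (-(n : ℤ))) k *
            qPoch q (-q ^ (n + 1)) (k + 1) / (qPoch q q k * qPoch q (-q ^ 2) k) = _
        simp only [cstS, q_zpow_neg_nat]
        rw [qPoch_succ (-q ^ (n + 1)) k, ← ha, ← hb, ← hc, ← hd]
        simp only [div_mul_eq_mul_div]
        rw [div_div]
        rw [div_eq_div_iff (mul_ne_zero (mul_ne_zero (mul_ne_zero hq h1q) h2q)
          (mul_ne_zero hC hD)) hDne]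
        ring
      show tS n (k + 1) + a1S n * tS (n + 1) (k + 1) = gS n (k + 1 + 1) - gS n (k + 1)
      rw [e1, e2, e3, e4, ← add_div, div_sub_div_same]
      congr 1
      ring

lemma a1S_ne_zero (n : ℕ) (hn : 1 ≤ n) : a1S n ≠ 0 := by
  unfold a1S
  apply div_ne_zero
  · exact mul_ne_zero (pow_ne_zero _ q_ne_zero) (one_add_q_pow_ne_zero _)
  · exact one_sub_q_pow_ne_zero n (by omega)

lemma qPoch_A_vanish' (n : ℕ) : qPoch q ((q ^ n)⁻¹) (n + 1) = 0 := by
  have := qPoch_A_vanish n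
  rwa [q_zpow_neg_nat] at this

lemma tS_vanish (n : ℕ) : tS n (n + 1) = 0 := by
  simp [tS, qPoch_A_vanish']

lemma gS_vanish (n : ℕ) : gS n (n + 2) = 0 := by
  show gS n ((n + 1) + 1) = 0
  simp [gS, qPoch_A_vanish']

lemma S_zero : ∀ n : ℕ, 1 ≤ n → ∑ k ∈ Finset.range (n + 1), tS n k = 0 := by
  intro n hn
  induction n, hn using Nat.le_induction with
  | base =>
      rw [Finset.sum_range_succ, Finset.sum_range_one]
      simp only [tS, qPoch, Finset.prod_range_one, Finset.prod_range_zero, pow_zero, pow_one,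
        q_zpow_neg_nat]
      have h1 : (1 : RatFunc ℚ) - q ≠ 0 := by
        have := one_sub_q_pow_ne_zero 1 one_ne_zero; simpa using this
      have h2 : (1 : RatFunc ℚ) + q ^ 2 ≠ 0 := one_add_q_pow_ne_zero 2
      have hq := q_ne_zero
      have h2' : (1 : RatFunc ℚ) - -q ^ (1 + 1) ≠ 0 := by rw [sub_neg_eq_add]; exact h2
      field_simp
      ring
  | succ n hn ih =>
      have hsum : ∑ k ∈ Finset.range (n + 2), (tS n k + a1S n * tS (n + 1) k)
          = gS n (n + 2) - gS n 0 := by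
        rw [Finset.sum_congr rfl (fun k _ => key n hn k)]
        exact Finset.sum_range_sub (gS n) (n + 2)
      rw [gS_vanish, show gS n 0 = 0 from rfl, sub_zero, Finset.sum_add_distrib,
        ← Finset.mul_sum] at hsum
      have h0 : ∑ k ∈ Finset.range (n + 2), tS n k = 0 := by
        rw [Finset.sum_range_succ, ih, tS_vanish, add_zero]
      rw [h0, zero_add] at hsum
      exact (mul_eq_zero.mp hsum).resolve_left (a1S_ne_zero n hn)

lemma q_zpow_succ_nat (j : ℕ) : q ^ ((j : ℤ) + 1) = q ^ (j + 1) := by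
  rw [show ((j : ℤ) + 1) = ((j + 1 : ℕ) : ℤ) by push_cast; ring, zpow_natCast]

lemma prod_Icc_one {M : Type*} [CommMonoid M] (f : ℤ → M) :
    ∀ k : ℕ, ∏ i ∈ Finset.Icc (1 : ℤ) (k : ℤ), f i = ∏ j ∈ Finset.range k, f ((j : ℤ) + 1) := by
  intro k
  induction k with
  | zero => simp
  | succ k ih =>
      have hins : Finset.Icc (1 : ℤ) ((k + 1 : ℕ) : ℤ)
          = insert ((k : ℤ) + 1) (Finset.Icc (1 : ℤ) (k : ℤ)) := by
        ext x
        simp only [Finset.mem_Icc, Finset.mem_insert]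
        push_cast
        omega
      have hnotmem : ((k : ℤ) + 1) ∉ Finset.Icc (1 : ℤ) (k : ℤ) := by
        simp only [Finset.mem_Icc]
        omega
      rw [hins, Finset.prod_insert hnotmem, ih, Finset.prod_range_succ]
      exact mul_comm _ _

lemma factor_eq (j : ℕ) :
    (1 : Polynomial (RatFunc ℚ)) - Polynomial.C q * (1 - Polynomial.C (1 - q) * Polynomial.X) *
        Polynomial.C q ^ j
      = Polynomial.C (1 - q) *
        (Polynomial.C (qint ((j : ℤ) + 1)) + Polynomial.C (q ^ ((j : ℤ) + 1)) * Polynomial.X) := by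
  have h1 : (1 - q) * qint ((j : ℤ) + 1) = 1 - q ^ (j + 1) := by
    rw [qint, q_zpow_succ_nat, mul_div_assoc']
    exact mul_div_cancel_left₀ _ one_sub_q_ne_zero
  rw [mul_add, ← Polynomial.C_mul, h1, q_zpow_succ_nat, ← mul_assoc, ← Polynomial.C_mul]
  simp only [map_sub, map_one, map_mul, Polynomial.C_pow, map_pow]
  ring

lemma qfact_mul (k : ℕ) : (1 - q) ^ k * qfact k = qPoch q q k := by
  have hstep : ∏ m ∈ Finset.range k, ((1 - q) * qint ((m : ℤ) + 1))
      = (1 - q) ^ k * qfact k := by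
    rw [Finset.prod_mul_distrib, Finset.prod_const, Finset.card_range, qfact]
  rw [← hstep, qPoch]
  refine Finset.prod_congr rfl fun m _ => ?_
  have h1 : (1 - q) * qint ((m : ℤ) + 1) = 1 - q ^ (m + 1) := by
    rw [qint, q_zpow_succ_nat, mul_div_assoc']
    exact mul_div_cancel_left₀ _ one_sub_q_ne_zero
  rw [h1]
  ring

lemma qfact_ne_zero (k : ℕ) : qfact k ≠ 0 := by
  intro h
  have := qfact_mul k
  rw [h, mul_zero] at this
  exact qPoch_C_ne_zero k this.symm

lemma pochPoly_eq (k : ℕ) :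
    pochPoly k = Polynomial.C (qPoch q q k) * qbinomPoly k k := by
  unfold pochPoly qbinomPoly
  rw [show ((k : ℤ) - (k : ℕ) + 1) = 1 by ring]
  rw [prod_Icc_one (fun i => Polynomial.C (qint i) + Polynomial.C (q ^ i) * Polynomial.X) k]
  have lhs : ∏ j ∈ Finset.range k,
      ((1 : Polynomial (RatFunc ℚ)) - Polynomial.C q * (1 - Polynomial.C (1 - q) * Polynomial.X) *
        Polynomial.C q ^ j)
      = Polynomial.C ((1 - q) ^ k) *
        ∏ j ∈ Finset.range k,
          (Polynomial.C (qint ((j : ℤ) + 1)) + Polynomial.C (q ^ ((j : ℤ) + 1)) * Polynomial.X) := by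
    rw [Finset.prod_congr rfl fun j _ => factor_eq j, Finset.prod_mul_distrib,
      Finset.prod_const, Finset.card_range, ← Polynomial.C_pow]
  rw [lhs, ← mul_assoc, ← Polynomial.C_mul]
  congr 2
  have hq1 : qPoch q q k = (1 - q) ^ k * qfact k := (qfact_mul k).symm
  rw [hq1, mul_assoc, mul_inv_cancel₀ (qfact_ne_zero k), mul_one]

set_option synthInstance.maxHeartbeats 1000000 in
set_option maxHeartbeats 1000000 in
theorem Phi_bigP_zero (Φ : Polynomial (RatFunc ℚ) →ₗ[RatFunc ℚ] RatFunc ℚ)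
    (hΦ : ∀ n : ℕ, Φ (qbinomPoly n n) = (qPoch q (-q ^ 2) n)⁻¹) :
    ∀ n : ℕ, 1 ≤ n → Φ (bigP 0 n) = 0 := by
  intro n hn
  have hPhiPoch : ∀ k : ℕ, Φ (pochPoly k) = qPoch q q k * (qPoch q (-q ^ 2) k)⁻¹ := by
    intro k
    rw [pochPoly_eq, ← Polynomial.smul_eq_C_mul, map_smul, hΦ k, smul_eq_mul]
  unfold bigP
  rw [← Polynomial.smul_eq_C_mul, map_smul, map_sum]
  have hterm : ∀ k ∈ Finset.range (n + 1),
      Φ (Polynomial.C (qPoch q (q ^ (-(n : ℤ))) k * qPoch q (-q ^ (n + 0 + 1)) k * q ^ k /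
          (qPoch q q k * qPoch q (q ^ (0 + 1)) k)) * pochPoly k) = tS n k := by
    intro k _
    rw [← Polynomial.smul_eq_C_mul, map_smul, hPhiPoch k, smul_eq_mul]
    have hC := qPoch_C_ne_zero k
    have hD := qPoch_D_ne_zero k
    rw [tS]
    simp only [Nat.add_zero, Nat.zero_add, pow_one]
    field_simp
  rw [Finset.sum_congr rfl hterm, S_zero n hn, smul_zero]
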